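/- arXiv:1907.09049 — 2 statements merged into one kernel-verified Lean document; each statement's English description precedes it below -/
import Mathlib

section
/- General stochastic competitive ratio bound: for all $\alpha > 1$, $m \geq 1$, $\Lambda > 0$, and $\mathbb{E}[X] > 0$, letting $C(s) = \frac{\mathbb{E}[X]}{s - \Lambda/m} + \frac{\mathbb{E}[X]}{s} s^\alpha$, we have $\frac{\lambda \inf_{s > \Lambda/m} C(s)}{\max\left(\Lambda \alpha (\alpha-1)^{1/\alpha - 1}, \, \Lambda^\alpha/m^{\alpha-1}\right)} \leq \frac{1 + 2^{\alpha - 1}}{\min\left(1, \alpha(\alpha-1)^{1/\alpha-1}\right)}$, where $\Lambda = \lambda \mathbb{E}[X]$. -/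
/-- General stochastic competitive ratio bound for the random-routing
gated-static policy with `P(s) = s^α`. -/
theorem stmt_16 (m : ℕ) (hm : 1 ≤ m) (α lam E : ℝ) (hα : 1 < α)
    (hlam : 0 < lam) (hE : 0 < E) (Λ : ℝ) (hΛ : Λ = lam * E) :
    lam * sInf ((fun s : ℝ => E / (s - Λ / m) + E / s * s ^ α) '' Set.Ioi (Λ / m)) /
        max (Λ * (α * (α - 1) ^ (1 / α - 1))) (Λ ^ α / (m : ℝ) ^ (α - 1))
      ≤ (1 + 2 ^ (α - 1)) / min 1 (α * (α - 1) ^ (1 / α - 1)) := by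
  have hm' : (0:ℝ) < m := by exact_mod_cast hm
  have hΛ0 : 0 < Λ := by rw [hΛ]; positivity
  set ρ : ℝ := Λ / m with hρdef
  have hρ : 0 < ρ := div_pos hΛ0 hm'
  have hα1 : (0:ℝ) < α - 1 := by linarith
  have hc : 0 < α * (α - 1) ^ (1 / α - 1) := by
    have := Real.rpow_pos_of_pos hα1 (1 / α - 1)
    nlinarith
  set c : ℝ := α * (α - 1) ^ (1 / α - 1) with hcdef
  -- key: (1+ρ)^(α-1) ≤ 2^(α-1) * max 1 (ρ^(α-1))
  have hsum : (1 + ρ) ≤ 2 * max 1 ρ := by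
    have h1 := le_max_left (1:ℝ) ρ
    have h2 := le_max_right (1:ℝ) ρ
    linarith
  have hmaxpow : (max 1 ρ) ^ (α - 1) = max 1 (ρ ^ (α - 1)) := by
    rcases le_total ρ 1 with h | h
    · rw [max_eq_left h, Real.one_rpow,
        max_eq_left (Real.rpow_le_one hρ.le h hα1.le)]
    · rw [max_eq_right h, max_eq_right (Real.one_le_rpow h hα1.le)]
  have hkey : (1 + ρ) ^ (α - 1) ≤ 2 ^ (α - 1) * max 1 (ρ ^ (α - 1)) := by
    calc (1 + ρ) ^ (α - 1) ≤ (2 * max 1 ρ) ^ (α - 1) :=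
          Real.rpow_le_rpow (by linarith) hsum hα1.le
      _ = 2 ^ (α - 1) * (max 1 ρ) ^ (α - 1) :=
          Real.mul_rpow (by norm_num) (le_max_of_le_left zero_le_one)
      _ = 2 ^ (α - 1) * max 1 (ρ ^ (α - 1)) := by rw [hmaxpow]
  -- sInf bound
  set S := ((fun s : ℝ => E / (s - ρ) + E / s * s ^ α) '' Set.Ioi ρ) with hS
  have hmem : E + E * (1 + ρ) ^ (α - 1) ∈ S := by
    refine ⟨1 + ρ, by simpa using hρ, ?_⟩
    have h1 : (0:ℝ) < 1 + ρ := by linarith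
    have hpow : (1 + ρ) ^ α = (1 + ρ) ^ (α - 1) * (1 + ρ) := by
      rw [← Real.rpow_add_one h1.ne' (α - 1)]; ring_nf
    simp only [add_sub_cancel_right, hpow]
    field_simp
  have hbdd : BddBelow S := by
    refine ⟨0, fun y hy => ?_⟩
    obtain ⟨s, hs, rfl⟩ := hy
    have hs' : ρ < s := hs
    have hs0 : 0 < s := lt_trans hρ hs'
    have h1 : 0 ≤ E / (s - ρ) := div_nonneg hE.le (by linarith)
    have h2 : 0 ≤ E / s * s ^ α :=
      mul_nonneg (div_nonneg hE.le hs0.le) (Real.rpow_nonneg hs0.le α)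
    linarith
  have hinf : sInf S ≤ E + E * (1 + ρ) ^ (α - 1) := csInf_le hbdd hmem
  -- rewrite second max argument
  have hden2 : Λ ^ α / (m : ℝ) ^ (α - 1) = Λ * ρ ^ (α - 1) := by
    rw [hρdef, Real.div_rpow hΛ0.le hm'.le]
    rw [show α = 1 + (α - 1) by ring, Real.rpow_add hΛ0, Real.rpow_one]
    ring
  set M : ℝ := max Λ (Λ * ρ ^ (α - 1)) with hMdef
  have hM0 : 0 < M := lt_max_of_lt_left hΛ0
  -- numerator bound
  have hnum : lam * sInf S ≤ (1 + 2 ^ (α - 1)) * M := by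
    have h1 : lam * sInf S ≤ lam * (E + E * (1 + ρ) ^ (α - 1)) :=
      mul_le_mul_of_nonneg_left hinf hlam.le
    have h2 : lam * (E + E * (1 + ρ) ^ (α - 1)) = Λ + Λ * (1 + ρ) ^ (α - 1) := by
      rw [hΛ]; ring
    have h3 : Λ ≤ M := le_max_left _ _
    have h4 : Λ * (1 + ρ) ^ (α - 1) ≤ 2 ^ (α - 1) * M := by
      have := mul_le_mul_of_nonneg_left hkey hΛ0.le
      have hmm : Λ * max 1 (ρ ^ (α - 1)) = M := by
        rcases le_total (1:ℝ) (ρ ^ (α - 1)) with h | h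
        · rw [max_eq_right h, hMdef,
            max_eq_right (by nlinarith : Λ ≤ Λ * ρ ^ (α - 1))]
        · rw [max_eq_left h, mul_one, hMdef,
            max_eq_left (by nlinarith : Λ * ρ ^ (α - 1) ≤ Λ)]
      calc Λ * (1 + ρ) ^ (α - 1) ≤ Λ * (2 ^ (α - 1) * (1 ⊔ ρ ^ (α - 1))) := this
        _ = 2 ^ (α - 1) * (Λ * (1 ⊔ ρ ^ (α - 1))) := by ring
        _ = 2 ^ (α - 1) * M := by rw [hmm]
    have hp : (0:ℝ) < 2 ^ (α - 1) := Real.rpow_pos_of_pos (by norm_num) _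
    nlinarith
  -- denominator bound
  have hden : min 1 c * M ≤ max (Λ * c) (Λ ^ α / (m : ℝ) ^ (α - 1)) := by
    rw [hden2]
    rcases le_total Λ (Λ * ρ ^ (α - 1)) with h | h
    · rw [hMdef, max_eq_right h]
      calc min 1 c * (Λ * ρ ^ (α - 1)) ≤ 1 * (Λ * ρ ^ (α - 1)) := by
            have : 0 ≤ Λ * ρ ^ (α - 1) := le_trans hΛ0.le h
            exact mul_le_mul_of_nonneg_right (min_le_left _ _) this
        _ = Λ * ρ ^ (α - 1) := one_mul _
        _ ≤ max (Λ * c) (Λ * ρ ^ (α - 1)) := le_max_right _ _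
    · rw [hMdef, max_eq_left h]
      calc min 1 c * Λ ≤ c * Λ := mul_le_mul_of_nonneg_right (min_le_right _ _) hΛ0.le
        _ = Λ * c := mul_comm _ _
        _ ≤ max (Λ * c) (Λ * ρ ^ (α - 1)) := le_max_left _ _
  have hmin : 0 < min 1 c := lt_min one_pos hc
  have hp : (0:ℝ) < 2 ^ (α - 1) := Real.rpow_pos_of_pos (by norm_num) _
  calc lam * sInf S / max (Λ * c) (Λ ^ α / (m : ℝ) ^ (α - 1))
      ≤ ((1 + 2 ^ (α - 1)) * M) / (min 1 c * M) :=
        div_le_div₀ (by positivity) hnum (by positivity) hden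
    _ = (1 + 2 ^ (α - 1)) / min 1 c := mul_div_mul_right _ _ hM0.ne'
end

section
/- Downtick–uptick matching for step functions: let $g : (0,\infty) \to \mathbb{Z}$ be a piecewise-constant, left-continuous function with finitely many jump points, such that $g(0^+) = g(\infty) = n - n_0$ for some integers, with downward jumps of size 1 at points $q(1), \ldots, q(r)$ and upward jumps of size 1 at points $q_o(1), \ldots, q_o(r)$ (each list with multiplicity, $r$ of each). Then there exists a bijection $\pi : \{1,\ldots,r\} \to \{1,\ldots,r\}$ such that for every $i$, $g(q(i)) \geq g(q_o(\pi(i))) + 1$. -/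
open Finset

private noncomputable def lvl (base : ℤ) {r : ℕ} (q qo : Fin r → ℝ) (x : ℝ) : ℤ :=
  base + ((Finset.univ.filter (fun i : Fin r => qo i < x)).card : ℤ)
    - ((Finset.univ.filter (fun i : Fin r => q i < x)).card : ℤ)

private lemma lvl_split (base : ℤ) {m : ℕ} (q qo : Fin (m+1) → ℝ)
    (i0 j0 : Fin (m+1)) (x : ℝ) :
    lvl base q qo x = lvl base (q ∘ i0.succAbove) (qo ∘ j0.succAbove) x
      + ((if qo j0 < x then 1 else 0) - (if q i0 < x then 1 else 0) : ℤ) := by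
  unfold lvl
  have h1 : ((Finset.univ.filter (fun i : Fin (m+1) => qo i < x)).card : ℤ)
      = ((Finset.univ.filter (fun i : Fin m => qo (j0.succAbove i) < x)).card : ℤ)
        + (if qo j0 < x then 1 else 0) := by
    rw [Finset.card_filter, Finset.card_filter,
      Fin.sum_univ_succAbove (fun i => if qo i < x then 1 else 0) j0]
    push_cast
    ring
  have h2 : ((Finset.univ.filter (fun i : Fin (m+1) => q i < x)).card : ℤ)
      = ((Finset.univ.filter (fun i : Fin m => q (i0.succAbove i) < x)).card : ℤ)
        + (if q i0 < x then 1 else 0) := by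
    rw [Finset.card_filter, Finset.card_filter,
      Fin.sum_univ_succAbove (fun i => if q i < x then 1 else 0) i0]
    push_cast
    ring
  rw [h1, h2]
  simp only [Function.comp]
  ring

private lemma step_lemma {m : ℕ} (base : ℤ) (q qo : Fin (m+1) → ℝ)
    (hqinj : Function.Injective q) (hqoinj : Function.Injective qo)
    (hdisj : ∀ i j, q i ≠ qo j) (i0 j0 : Fin (m+1))
    (h1 : lvl base q qo (qo j0) + 1 ≤ lvl base q qo (q i0))
    (h2 : ∀ (k l : Fin m),
      ((if qo j0 < qo (j0.succAbove l) then (1:ℤ) else 0)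
        - (if q i0 < qo (j0.succAbove l) then 1 else 0))
      ≤ ((if qo j0 < q (i0.succAbove k) then (1:ℤ) else 0)
        - (if q i0 < q (i0.succAbove k) then 1 else 0)))
    (IH : ∀ (q' qo' : Fin m → ℝ), Function.Injective q' → Function.Injective qo' →
      (∀ i j, q' i ≠ qo' j) →
      ∃ π' : Equiv.Perm (Fin m),
        ∀ k, lvl base q' qo' (qo' (π' k)) + 1 ≤ lvl base q' qo' (q' k)) :
    ∃ π : Equiv.Perm (Fin (m+1)),
      ∀ i, lvl base q qo (qo (π i)) + 1 ≤ lvl base q qo (q i) := by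
  obtain ⟨π', hπ'⟩ := IH (q ∘ i0.succAbove) (qo ∘ j0.succAbove)
    (hqinj.comp (Fin.succAbove_right_injective))
    (hqoinj.comp (Fin.succAbove_right_injective))
    (fun i j => hdisj _ _)
  refine ⟨(finSuccEquiv' i0).trans (π'.optionCongr.trans (finSuccEquiv' j0).symm), ?_⟩
  intro i
  by_cases hi : i = i0
  · subst hi
    simpa [finSuccEquiv'_at] using h1
  · obtain ⟨k, rfl⟩ := Fin.exists_succAbove_eq hi
    have hπ : ((finSuccEquiv' i0).trans (π'.optionCongr.trans (finSuccEquiv' j0).symm))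
        (i0.succAbove k) = j0.succAbove (π' k) := by
      simp [finSuccEquiv'_succAbove]
    rw [hπ]
    have e1 := lvl_split base q qo i0 j0 (qo (j0.succAbove (π' k)))
    have e2 := lvl_split base q qo i0 j0 (q (i0.succAbove k))
    have e3 := hπ' k
    have e4 := h2 k (π' k)
    simp only [Function.comp] at e3
    linarith

private lemma key (base : ℤ) : ∀ (r : ℕ) (q qo : Fin r → ℝ),
    Function.Injective q → Function.Injective qo → (∀ i j, q i ≠ qo j) →
    ∃ π : Equiv.Perm (Fin r),
      ∀ i, lvl base q qo (qo (π i)) + 1 ≤ lvl base q qo (q i) := by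
  intro r
  induction r with
  | zero => exact fun q qo _ _ _ => ⟨1, fun i => i.elim0⟩
  | succ m IH =>
    intro q qo hqinj hqoinj hdisj
    obtain ⟨i0, hi0⟩ := Finite.exists_max q
    by_cases hA : ∃ j, q i0 < qo j
    · -- case 1 : some uptick above the largest downtick
      obtain ⟨ja, hja⟩ := hA
      obtain ⟨j0, hj0mem, hj0min⟩ := Finset.exists_min_image
        (Finset.univ.filter fun j => q i0 < qo j) qo ⟨ja, by simpa using hja⟩
      simp only [Finset.mem_filter, Finset.mem_univ, true_and] at hj0mem
      have hj0min' : ∀ j, q i0 < qo j → qo j0 ≤ qo j := by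
        intro j hj
        exact hj0min j (by simpa using hj)
      apply step_lemma base q qo hqinj hqoinj hdisj i0 j0 _ _ IH
      · -- h1
        have hU : (Finset.univ.filter (fun j : Fin (m+1) => qo j < qo j0))
            = (Finset.univ.filter (fun j : Fin (m+1) => qo j < q i0)) := by
          ext u
          simp only [Finset.mem_filter, Finset.mem_univ, true_and]
          constructor
          · intro hu
            by_contra hle
            have : q i0 < qo u := lt_of_le_of_ne (not_lt.mp hle) (hdisj i0 u)
            exact absurd hu (not_lt.mpr (hj0min' u this))
          · intro hu; exact hu.trans hj0mem
        have hD : (insert i0 (Finset.univ.filter (fun i : Fin (m+1) => q i < q i0)))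
            ⊆ (Finset.univ.filter (fun i : Fin (m+1) => q i < qo j0)) := by
          intro d hd
          simp only [Finset.mem_insert, Finset.mem_filter, Finset.mem_univ, true_and] at hd ⊢
          rcases hd with rfl | hd
          · exact hj0mem
          · exact hd.trans hj0mem
        have hDc : (Finset.univ.filter (fun i : Fin (m+1) => q i < q i0)).card + 1
            ≤ (Finset.univ.filter (fun i : Fin (m+1) => q i < qo j0)).card := by
          have : i0 ∉ (Finset.univ.filter (fun i : Fin (m+1) => q i < q i0)) := by
            simp
          calc _ = (insert i0 (Finset.univ.filter (fun i : Fin (m+1) => q i < q i0))).card := by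
                  rw [Finset.card_insert_of_notMem this]
            _ ≤ _ := Finset.card_le_card hD
        unfold lvl
        rw [hU]
        push_cast
        omega
      · -- h2 : both sides are 0
        intro k l
        have hd : q (i0.succAbove k) < q i0 :=
          lt_of_le_of_ne (hi0 _) (fun h => (Fin.succAbove_ne i0 k) (hqinj h))
        have hd2 : q (i0.succAbove k) < qo j0 := hd.trans hj0mem
        rw [if_neg (not_lt.mpr hd2.le), if_neg (not_lt.mpr hd.le)]
        by_cases hu : q i0 < qo (j0.succAbove l)
        · have : qo j0 < qo (j0.succAbove l) :=
            lt_of_le_of_ne (hj0min' _ hu)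
              (fun h => (Fin.succAbove_ne j0 l) (hqoinj h).symm)
          rw [if_pos this, if_pos hu]; norm_num
        · have hu' : qo (j0.succAbove l) < q i0 :=
            lt_of_le_of_ne (not_lt.mp hu) (fun h => hdisj i0 (j0.succAbove l) h.symm)
          rw [if_neg (not_lt.mpr (hu'.trans hj0mem).le), if_neg hu]
    · -- all upticks below the largest downtick
      push_neg at hA
      have hA' : ∀ j, qo j < q i0 := fun j =>
        lt_of_le_of_ne (hA j) (fun h => hdisj i0 j h.symm)
      obtain ⟨j0, hj0⟩ := Finite.exists_min qo
      by_cases hB : ∃ i, q i < qo j0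
      · -- case 2
        obtain ⟨ib, hib⟩ := hB
        obtain ⟨i1, hi1mem, hi1max⟩ := Finset.exists_max_image
          (Finset.univ.filter fun i => q i < qo j0) q ⟨ib, by simpa using hib⟩
        simp only [Finset.mem_filter, Finset.mem_univ, true_and] at hi1mem
        have hi1max' : ∀ i, q i < qo j0 → q i ≤ q i1 := by
          intro i hi
          exact hi1max i (by simpa using hi)
        apply step_lemma base q qo hqinj hqoinj hdisj i1 j0 _ _ IH
        · -- h1
          have hU0 : (Finset.univ.filter (fun j : Fin (m+1) => qo j < qo j0)) = ∅ := by
            ext u; simp only [Finset.mem_filter, Finset.mem_univ, true_and,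
              Finset.notMem_empty, iff_false]
            exact not_lt.mpr (hj0 u)
          have hU1 : (Finset.univ.filter (fun j : Fin (m+1) => qo j < q i1)) = ∅ ∨ True := Or.inr trivial
          have hD : (insert i1 (Finset.univ.filter (fun i : Fin (m+1) => q i < q i1)))
              ⊆ (Finset.univ.filter (fun i : Fin (m+1) => q i < qo j0)) := by
            intro d hd
            simp only [Finset.mem_insert, Finset.mem_filter, Finset.mem_univ, true_and] at hd ⊢
            rcases hd with rfl | hd
            · exact hi1mem
            · exact hd.trans hi1mem
          have hDc : (Finset.univ.filter (fun i : Fin (m+1) => q i < q i1)).card + 1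
              ≤ (Finset.univ.filter (fun i : Fin (m+1) => q i < qo j0)).card := by
            have : i1 ∉ (Finset.univ.filter (fun i : Fin (m+1) => q i < q i1)) := by simp
            calc _ = (insert i1 (Finset.univ.filter (fun i : Fin (m+1) => q i < q i1))).card := by
                    rw [Finset.card_insert_of_notMem this]
              _ ≤ _ := Finset.card_le_card hD
          unfold lvl
          rw [hU0]
          simp only [Finset.card_empty]
          push_cast
          omega
        · -- h2 : both sides 0
          intro k l
          have hu : qo j0 < qo (j0.succAbove l) :=
            lt_of_le_of_ne (hj0 _)
              (fun h => (Fin.succAbove_ne j0 l) (hqoinj h).symm)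
          rw [if_pos hu, if_pos (hi1mem.trans hu)]
          by_cases hd : q (i1.succAbove k) < qo j0
          · have hd1 : q (i1.succAbove k) < q i1 :=
              lt_of_le_of_ne (hi1max' _ hd)
                (fun h => (Fin.succAbove_ne i1 k) (hqinj h))
            rw [if_neg (not_lt.mpr hd.le), if_neg (not_lt.mpr hd1.le)]; norm_num
          · have hd1 : qo j0 < q (i1.succAbove k) :=
              lt_of_le_of_ne (not_lt.mp hd) (hdisj _ _).symm
            rw [if_pos hd1, if_pos (hi1mem.trans hd1)]
      · -- case 3
        push_neg at hB
        have hB' : ∀ i, qo j0 < q i := fun i =>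
          lt_of_le_of_ne (hB i) (hdisj i j0).symm
        apply step_lemma base q qo hqinj hqoinj hdisj i0 j0 _ _ IH
        · -- h1
          have hU1 : (Finset.univ.filter (fun j : Fin (m+1) => qo j < q i0)) = Finset.univ := by
            ext u; simp [hA' u]
          have hU0 : (Finset.univ.filter (fun j : Fin (m+1) => qo j < qo j0)) = ∅ := by
            ext u; simp only [Finset.mem_filter, Finset.mem_univ, true_and,
              Finset.notMem_empty, iff_false]
            exact not_lt.mpr (hj0 u)
          have hD0 : (Finset.univ.filter (fun i : Fin (m+1) => q i < qo j0)) = ∅ := by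
            ext u; simp only [Finset.mem_filter, Finset.mem_univ, true_and,
              Finset.notMem_empty, iff_false]
            exact not_lt.mpr (hB' u).le
          have hD1 : (Finset.univ.filter (fun i : Fin (m+1) => q i < q i0)).card ≤ m := by
            have hsub : (Finset.univ.filter (fun i : Fin (m+1) => q i < q i0))
                ⊆ Finset.univ.erase i0 := by
              intro d hd
              simp only [Finset.mem_filter, Finset.mem_univ, true_and] at hd
              simp only [Finset.mem_erase, Finset.mem_univ, and_true]
              exact fun h => absurd hd (by rw [h]; exact lt_irrefl _)
            calc _ ≤ (Finset.univ.erase i0).card := Finset.card_le_card hsub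
              _ = m := by simp [Finset.card_erase_of_mem]
          unfold lvl
          rw [hU0, hU1, hD0]
          simp only [Finset.card_univ, Fintype.card_fin, Finset.card_empty]
          push_cast
          omega
        · -- h2 : both sides 1
          intro k l
          have h1d : qo j0 < q (i0.succAbove k) := hB' _
          have h2d : ¬ q i0 < q (i0.succAbove k) := not_lt.mpr (hi0 _)
          have h1u : qo j0 < qo (j0.succAbove l) :=
            lt_of_le_of_ne (hj0 _)
              (fun h => (Fin.succAbove_ne j0 l) (hqoinj h).symm)
          have h2u : ¬ q i0 < qo (j0.succAbove l) := not_lt.mpr (hA' _).le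
          rw [if_pos h1d, if_neg h2d, if_pos h1u, if_neg h2u]

/-- Downtick–uptick matching: let `g` be the left-continuous integer step
function with base level `n - n₀`, unit downward jumps at the (distinct)
points `q i > 0` and unit upward jumps at the (distinct) points `qo i > 0`.
Then there is a bijection matching each downtick at `q i` to an uptick at
`qo (π i)` with `g (q i) ≥ g (qo (π i)) + 1`. -/
theorem stmt_17 (n n₀ : ℤ) (r : ℕ) (q qo : Fin r → ℝ)
    (hq : ∀ i, 0 < q i) (hqo : ∀ i, 0 < qo i)
    (hqinj : Function.Injective q) (hqoinj : Function.Injective qo)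
    (hdisj : ∀ i j, q i ≠ qo j)
    (g : ℝ → ℤ)
    (hg : ∀ x : ℝ, g x = (n - n₀)
        + ((Finset.univ.filter (fun i : Fin r => qo i < x)).card : ℤ)
        - ((Finset.univ.filter (fun i : Fin r => q i < x)).card : ℤ)) :
    ∃ π : Equiv.Perm (Fin r), ∀ i : Fin r, g (qo (π i)) + 1 ≤ g (q i) := by
  obtain ⟨π, hπ⟩ := key (n - n₀) r q qo hqinj hqoinj hdisj
  exact ⟨π, fun i => by rw [hg, hg]; exact hπ i⟩
end
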